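/- arXiv:1912.11941 — 2 statements merged into one kernel-verified Lean document; each statement's English description precedes it below -/
import Mathlib

section
/- Let G be a finite group, p a prime, and G_p a Sylow p-subgroup of G. Then G_p ∩ [G,G] ∩ Z(G) is contained in [G_p, G_p]. -/
theorem stmt_3 (G : Type*) [Group G] [Finite G] (p : ℕ) [Fact p.Prime] (Gp : Sylow p G) :
    (Gp : Subgroup G) ⊓ commutator G ⊓ Subgroup.center G ≤
      ⁅(Gp : Subgroup G), (Gp : Subgroup G)⁆ := by
  intro x hx
  obtain ⟨⟨hxP, hxC⟩, hxZ⟩ := hx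
  set H : Subgroup G := (Gp : Subgroup G) with hH
  haveI : H.FiniteIndex := ⟨H.index_ne_zero_of_finite⟩
  set ϕ : H →* Abelianization H := Abelianization.of
  set f := MonoidHom.transfer ϕ with hf
  have key : ∀ (k : ℕ) (g₀ : G), g₀⁻¹ * x ^ k * g₀ ∈ H → g₀⁻¹ * x ^ k * g₀ = x ^ k := by
    intro k g₀ _
    have hz : x ^ k ∈ Subgroup.center G := Subgroup.pow_mem _ hxZ k
    rw [Subgroup.mem_center_iff] at hz
    rw [mul_assoc, ← hz g₀, ← mul_assoc, inv_mul_cancel, one_mul]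
  have h1 : f x = ϕ ⟨x ^ H.index, MonoidHom.transfer_eq_pow_aux x key⟩ :=
    MonoidHom.transfer_eq_pow ϕ x key
  have h2 : f x = 1 := Abelianization.commutator_subset_ker f hxC
  have h3 : (⟨x ^ H.index, MonoidHom.transfer_eq_pow_aux x key⟩ : H) ∈ commutator H := by
    rw [h1] at h2
    exact (QuotientGroup.eq_one_iff _).mp h2
  have h4 : x ^ H.index ∈ ⁅H, H⁆ := by
    have hm := Subgroup.mem_map_of_mem H.subtype h3
    rw [commutator_def, Subgroup.map_commutator] at hm
    rwa [← MonoidHom.range_eq_map, Subgroup.range_subtype H] at hm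
  -- coprimality
  have hpn : ¬ p ∣ H.index := Gp.not_dvd_index
  have hpc : p.Coprime H.index := (Nat.Prime.coprime_iff_not_dvd (Fact.out)).mpr hpn
  have hco : (orderOf (⟨x, hxP⟩ : H)).Coprime H.index := Gp.2.orderOf_coprime hpc _
  rw [Subgroup.orderOf_mk] at hco
  rcases Nat.lt_or_ge 1 (orderOf x) with hlt | hle
  · obtain ⟨m, -, hm⟩ :=
      Nat.exists_mul_mod_eq_one_of_coprime (Nat.Coprime.symm hco) hlt
    have : x = (x ^ H.index) ^ m := by
      rw [← pow_mul, ← pow_mod_orderOf, hm, pow_one]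
    rw [this]
    exact Subgroup.pow_mem _ h4 m
  · interval_cases h : (orderOf x)
    · exact absurd h (orderOf_pos x).ne'
    · rw [orderOf_eq_one_iff.mp h]
      exact Subgroup.one_mem _
end

section
/- Let G be a finite group, H ≤ G a subgroup of index 1 or p for a prime p, and M an abelian p-subgroup of G with M ⊆ Z(G) ∩ [G,G]. Then M ⊆ Φ^G(H). -/
/-- The focal subgroup `Φ^G(H)`: generated by all commutators `[h,x] = h⁻¹x⁻¹hx`
with `x ∈ G` and `h ∈ H ∩ xHx⁻¹`. -/
def focalSubgroup {G : Type*} [Group G] (H : Subgroup G) : Subgroup G :=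
  Subgroup.closure {g : G | ∃ x h : G, h ∈ H ∧ x⁻¹ * h * x ∈ H ∧ g = h⁻¹ * x⁻¹ * h * x}

open scoped commutatorElement

theorem stmt_4 (G : Type*) [Group G] [Finite G] (p : ℕ) [Fact p.Prime]
    (H M : Subgroup G) (hindex : H.index = 1 ∨ H.index = p)
    (hMp : IsPGroup p M) (hMcomm : IsMulCommutative M)
    (hM : M ≤ Subgroup.center G ⊓ commutator G) :
    M ≤ focalSubgroup H := by
  have hp : p.Prime := Fact.out
  rcases hindex with h1 | hpidx
  · -- index 1 : H = ⊤, the focal subgroup contains all commutators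
    have hH : H = ⊤ := Subgroup.index_eq_one.mp h1
    subst hH
    refine le_trans (le_trans hM inf_le_right) ?_
    rw [commutator_def, Subgroup.commutator_le]
    intro a _ b _
    apply Subgroup.subset_closure
    refine ⟨b⁻¹, a⁻¹, Subgroup.mem_top _, Subgroup.mem_top _, ?_⟩
    rw [commutatorElement_def]
    group
  · -- index p
    intro m hm
    obtain ⟨hmZ, hmC⟩ : m ∈ Subgroup.center G ∧ m ∈ commutator G := hM hm
    -- a Sylow p-subgroup containing M
    obtain ⟨P, hMP⟩ := hMp.exists_le_sylow
    have hmP : m ∈ (P : Subgroup G) := hMP hm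
    set Pg : Subgroup G := (P : Subgroup G) with hPg
    -- the subgroup Q' = H ∩ P inside P
    set Q' : Subgroup ↥Pg := H.subgroupOf Pg with hQ'
    -- relindex of H in P is 1 or p
    have hrel : H.relIndex Pg = 1 ∨ H.relIndex Pg = p := by
      have hrel_le : H.relIndex Pg ≤ p := by
        have h1 : H.relIndex Pg ≤ H.relIndex ⊤ := by
          apply Subgroup.relIndex_le_of_le_right le_top
          rw [Subgroup.relIndex_top_right]
          exact Subgroup.FiniteIndex.index_ne_zero
        rwa [Subgroup.relIndex_top_right, hpidx] at h1
      have hrel_dvd : H.relIndex Pg ∣ Nat.card ↥Pg := Subgroup.index_dvd_card _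
      obtain ⟨n, hn⟩ := IsPGroup.iff_card.mp P.isPGroup'
      rw [hn] at hrel_dvd
      obtain ⟨k, hk, hkeq⟩ := (Nat.dvd_prime_pow hp).mp hrel_dvd
      rw [hkeq] at hrel_le
      have hk1 : k ≤ 1 := by
        have h2 : p ^ k ≤ p ^ 1 := by rwa [pow_one]
        exact (Nat.pow_le_pow_iff_right hp.one_lt).mp h2
      interval_cases k
      · left; simpa using hkeq
      · right; simpa using hkeq
    have hQ'index : Q'.index = H.relIndex Pg := rfl
    -- Q' is normal in P
    have hQnormal : Q'.Normal := by
      rcases hrel with h1 | hpr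
      · have hPH : Pg ≤ H := Subgroup.relIndex_eq_one.mp h1
        have hTop : Q' = ⊤ := by rw [hQ', Subgroup.subgroupOf_eq_top]; exact hPH
        rw [hTop]; infer_instance
      · have hnc : NormalizerCondition ↥Pg :=
          @normalizerCondition_of_isNilpotent _ _ P.isPGroup'.isNilpotent
        apply Subgroup.NormalizerCondition.normal_of_coatom _ hnc
        constructor
        · intro htop
          rw [← Subgroup.index_eq_one, hQ'index, hpr] at htop
          exact hp.one_lt.ne' htop
        · intro K hK
          have hle : Q' ≤ K := hK.le
          have hmul : Q'.relIndex K * K.index = p := by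
            rw [Subgroup.relIndex_mul_index hle, hQ'index, hpr]
          have hdvd : K.index ∣ p := ⟨Q'.relIndex K, by rw [← hmul, mul_comm]⟩
          rcases hp.eq_one_or_self_of_dvd _ hdvd with h | h
          · exact Subgroup.index_eq_one.mp h
          · exfalso
            rw [h, Nat.mul_eq_right hp.pos.ne'] at hmul
            exact hK.not_ge (Subgroup.relIndex_eq_one.mp hmul)
    haveI := hQnormal
    -- transfer argument: m (as an element of P) lies in the commutator subgroup of P
    set mP : ↥Pg := ⟨m, hmP⟩ with hmPdef
    have hmPcomm : mP ∈ commutator ↥Pg := by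
      set ϕ : ↥Pg →* Abelianization ↥Pg := Abelianization.of with hϕ
      have key : ∀ (k : ℕ) (g₀ : G), g₀⁻¹ * m ^ k * g₀ ∈ Pg → g₀⁻¹ * m ^ k * g₀ = m ^ k := by
        intro k g₀ _
        have hc : m ^ k ∈ Subgroup.center G := Subgroup.pow_mem _ hmZ k
        rw [mul_assoc, ← Subgroup.mem_center_iff.mp hc g₀, ← mul_assoc,
          inv_mul_cancel, one_mul]
      have htransfer := MonoidHom.transfer_eq_pow ϕ m key
      have hker : ϕ.transfer m = 1 :=
        Abelianization.commutator_subset_ker ϕ.transfer hmC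
      have hpow : ϕ (mP ^ Pg.index) = 1 := by
        have hEq : mP ^ Pg.index =
            (⟨m ^ Pg.index, MonoidHom.transfer_eq_pow_aux m key⟩ : ↥Pg) := by
          ext
          simp [hmPdef]
        rw [hEq, ← htransfer]
        exact hker
      obtain ⟨r, hr⟩ := hMp ⟨m, hm⟩
      have hmProrder : mP ^ p ^ r = 1 := by
        have h3 := congrArg (Subtype.val) hr
        ext
        simpa using h3
      have hnot : ¬ p ∣ Pg.index := P.not_dvd_index
      have ht1 : (ϕ mP) ^ Pg.index = 1 := by rw [← map_pow, hpow]
      have ht2 : (ϕ mP) ^ p ^ r = 1 := by rw [← map_pow, hmProrder, map_one]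
      have hd1 : orderOf (ϕ mP) ∣ Pg.index := orderOf_dvd_of_pow_eq_one ht1
      have hd2 : orderOf (ϕ mP) ∣ p ^ r := orderOf_dvd_of_pow_eq_one ht2
      have hcop : Nat.Coprime (p ^ r) Pg.index :=
        Nat.Coprime.pow_left _ (hp.coprime_iff_not_dvd.mpr hnot)
      have hdvd1 : orderOf (ϕ mP) ∣ 1 := by
        have h4 := Nat.dvd_gcd hd2 hd1
        rwa [Nat.Coprime.gcd_eq_one hcop] at h4
      have hϕone : ϕ mP = 1 := orderOf_eq_one_iff.mp (Nat.dvd_one.mp hdvd1)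
      exact (QuotientGroup.eq_one_iff mP).mp hϕone
    -- The commutator subgroup of P is contained in ⁅⊤, Q'⁆
    set K : Subgroup ↥Pg := ⁅(⊤ : Subgroup ↥Pg), Q'⁆ with hKdef
    haveI : K.Normal := Subgroup.commutator_normal ⊤ Q'
    have hKQ : K ≤ Q' := Subgroup.commutator_le_right ⊤ Q'
    have hcommK : commutator ↥Pg ≤ K := by
      set f : ↥Pg ⧸ K →* ↥Pg ⧸ Q' :=
        QuotientGroup.map K Q' (MonoidHom.id _) (by simpa using hKQ) with hf
      have hcyc : IsCyclic (↥Pg ⧸ Q') := by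
        rcases hrel with h1 | hpr
        · have hcard1 : Nat.card (↥Pg ⧸ Q') = 1 := by
            rw [show Nat.card (↥Pg ⧸ Q') = Q'.index from rfl, hQ'index, h1]
          haveI : Subsingleton (↥Pg ⧸ Q') := (Nat.card_eq_one_iff_unique.mp hcard1).1
          infer_instance
        · exact isCyclic_of_prime_card
            (show Nat.card (↥Pg ⧸ Q') = p from hQ'index.trans hpr)
      have hcenter : f.ker ≤ Subgroup.center (↥Pg ⧸ K) := by
        intro x hx
        rw [Subgroup.mem_center_iff]
        intro y
        obtain ⟨x, rfl⟩ := QuotientGroup.mk_surjective x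
        obtain ⟨y, rfl⟩ := QuotientGroup.mk_surjective y
        have hxQ : x ∈ Q' := by
          have h5 : f (QuotientGroup.mk x) = 1 := hx
          rw [hf, QuotientGroup.map_mk, MonoidHom.id_apply] at h5
          exact (QuotientGroup.eq_one_iff x).mp h5
        show (QuotientGroup.mk (y * x) : ↥Pg ⧸ K) = QuotientGroup.mk (x * y)
        rw [QuotientGroup.eq]
        have hmem : ⁅y⁻¹, x⁻¹⁆ ∈ K :=
          Subgroup.commutator_mem_commutator (Subgroup.mem_top _) (Q'.inv_mem hxQ)
        have h6 : (y * x)⁻¹ * (x * y) = ⁅y⁻¹, x⁻¹⁆⁻¹ := by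
          rw [commutatorElement_def]
          group
        rw [h6]
        exact K.inv_mem hmem
      have hcomm : ∀ a b : ↥Pg ⧸ K, a * b = b * a := fun a b =>
        commutative_of_cyclic_center_quotient f hcenter a b
      rw [commutator_def, Subgroup.commutator_le]
      intro g₁ _ g₂ _
      rw [← QuotientGroup.eq_one_iff]
      have h9 : ((⁅g₁, g₂⁆ : ↥Pg) : ↥Pg ⧸ K) =
          ⁅((g₁ : ↥Pg) : ↥Pg ⧸ K), ((g₂ : ↥Pg) : ↥Pg ⧸ K)⁆ :=
        map_commutatorElement (QuotientGroup.mk' K) g₁ g₂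
      rw [h9]
      exact commutatorElement_eq_one_iff_commute.mpr (hcomm _ _)
    -- ⁅⊤, Q'⁆ is contained in the focal subgroup
    have hKF : K ≤ (focalSubgroup H).subgroupOf Pg := by
      rw [hKdef, Subgroup.commutator_le]
      intro a _ q hq
      rw [Subgroup.mem_subgroupOf]
      have hgen : ((q : G) * a * (q : G)⁻¹ * (a : G)⁻¹ : G) ∈ focalSubgroup H := by
        apply Subgroup.subset_closure
        refine ⟨(a : G)⁻¹, (q : G)⁻¹, H.inv_mem hq, ?_, by group⟩
        have h7 : a * q⁻¹ * a⁻¹ ∈ Q' := hQnormal.conj_mem q⁻¹ (Q'.inv_mem hq) a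
        rw [hQ', Subgroup.mem_subgroupOf] at h7
        simpa using h7
      have h8 : ((⁅a, q⁆ : ↥Pg) : G) = ((q : G) * a * (q : G)⁻¹ * (a : G)⁻¹)⁻¹ := by
        rw [commutatorElement_def]
        push_cast
        group
      rw [h8]
      exact (focalSubgroup H).inv_mem hgen
    have hfin : mP ∈ (focalSubgroup H).subgroupOf Pg := hKF (hcommK hmPcomm)
    rw [Subgroup.mem_subgroupOf] at hfin
    exact hfin
end
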